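/- Let q = 2n+1 ≥ 5 be an odd prime power with characteristic p, and let s_1 = 1, s_2, …, s_n be the nonzero squares of F_q. Then (-1)^{(n-1)(n-2)/2} · ∏_{2 ≤ i < j ≤ n} (s_j - s_i)^2 = (-1/2)^{n-2} in F_q. -/

import Mathlib

open Finset Polynomial

theorem aux_pairs {R : Type*} [CommRing R] {d : ℕ} (f : Fin d → R) :
    (-1 : R) ^ (d * (d-1) / 2) *
      ∏ p ∈ Finset.univ.filter (fun p : Fin d × Fin d => p.1 < p.2), (f p.2 - f p.1) ^ 2
    = ∏ p ∈ Finset.univ.offDiag, (f p.1 - f p.2) := by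
  classical
  set L := Finset.univ.filter (fun p : Fin d × Fin d => p.1 < p.2) with hL
  set G := Finset.univ.filter (fun p : Fin d × Fin d => p.2 < p.1) with hG
  have hmemL : ∀ p : Fin d × Fin d, p ∈ L ↔ p.1 < p.2 := by
    intro p; rw [hL, Finset.mem_filter]; simp
  have hmemG : ∀ p : Fin d × Fin d, p ∈ G ↔ p.2 < p.1 := by
    intro p; rw [hG, Finset.mem_filter]; simp
  have hunion : (Finset.univ.offDiag : Finset (Fin d × Fin d)) = L ∪ G := by
    ext p
    rw [Finset.mem_offDiag, Finset.mem_union, hmemL, hmemG]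
    constructor
    · rintro ⟨-, -, h⟩; exact lt_or_gt_of_ne h
    · rintro (h | h)
      · exact ⟨Finset.mem_univ _, Finset.mem_univ _, ne_of_lt h⟩
      · exact ⟨Finset.mem_univ _, Finset.mem_univ _, (ne_of_lt h).symm⟩
  have hdisj : Disjoint L G := by
    rw [Finset.disjoint_left]
    intro p hp hq
    rw [hmemL] at hp; rw [hmemG] at hq
    exact absurd hp (not_lt_of_gt hq)
  have hswapprod : ∏ p ∈ G, (f p.1 - f p.2) = ∏ p ∈ L, (f p.2 - f p.1) := by
    refine Finset.prod_nbij' Prod.swap Prod.swap ?_ ?_ ?_ ?_ ?_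
    · intro p hp; rw [hmemG] at hp; rw [hmemL]; exact hp
    · intro p hp; rw [hmemL] at hp; rw [hmemG]; exact hp
    · intro p _; exact Prod.swap_swap p
    · intro p _; exact Prod.swap_swap p
    · intro p _; rfl
  have hcardLG : L.card = G.card := by
    refine Finset.card_nbij Prod.swap ?_ ?_ ?_
    · intro p hp; rw [Finset.mem_coe, hmemL] at hp; rw [Finset.mem_coe, hmemG]; exact hp
    · intro p _ q _ h; exact Prod.swap_injective h
    · intro p hp; rw [Finset.mem_coe, hmemG] at hp
      exact ⟨p.swap, by rw [Finset.mem_coe, hmemL]; exact hp, Prod.swap_swap p⟩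
  have hcardoff : (Finset.univ.offDiag : Finset (Fin d × Fin d)).card = d * d - d := by
    rw [Finset.offDiag_card, Finset.card_univ, Fintype.card_fin]
  have hcardL : L.card = d * (d-1) / 2 := by
    have h1 : L.card + G.card = d * d - d := by
      rw [← hcardoff, hunion, Finset.card_union_of_disjoint hdisj]
    have hdd1 : d * (d - 1) = d * d - d := by cases d <;> simp [Nat.mul_sub, Nat.mul_succ] <;> omega
    generalize hgen : d * (d - 1) = m at hdd1 ⊢
    generalize hgen2 : d * d = k at h1 hdd1
    omega
  rw [hunion, Finset.prod_union hdisj, hswapprod, ← Finset.prod_mul_distrib, ← hcardL]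
  have hstep : ∀ p ∈ L, (f p.1 - f p.2) * (f p.2 - f p.1) = (-1) * (f p.2 - f p.1)^2 := by
    intro p _; ring
  rw [Finset.prod_congr rfl hstep, Finset.prod_mul_distrib, Finset.prod_const]

theorem aux_poly {F : Type*} [Field F] (T : Finset F) (n : ℕ) (hn0 : n ≠ 0)
    (hcard : T.card = n) (hroots : ∀ c ∈ T, c ^ n = 1) :
    ∏ c ∈ T, (X - C c) = X ^ n - 1 := by
  classical
  have hqmon : (X ^ n - 1 : F[X]).Monic := by
    have := Polynomial.monic_X_pow_sub_C (1 : F) hn0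
    rwa [Polynomial.C_1] at this
  have hq0 : (X ^ n - 1 : F[X]) ≠ 0 := hqmon.ne_zero
  have hle : T.val ≤ (X ^ n - 1 : F[X]).roots := by
    rw [Multiset.le_iff_subset T.nodup]
    intro c hc
    rw [Polynomial.mem_roots hq0]
    simp [Polynomial.IsRoot, hroots c hc]
  have hdvd : (∏ c ∈ T, (X - C c)) ∣ (X ^ n - 1 : F[X]) := by
    rw [Finset.prod_eq_multiset_prod]
    exact (Multiset.prod_X_sub_C_dvd_iff_le_roots hq0 T.val).2 hle
  have hpmon : (∏ c ∈ T, (X - C c)).Monic :=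
    Polynomial.monic_prod_of_monic _ _ (fun c _ => Polynomial.monic_X_sub_C c)
  have hpdeg : (∏ c ∈ T, (X - C c)).natDegree = n := by
    rw [Finset.prod_eq_multiset_prod]
    rw [Polynomial.natDegree_multiset_prod_X_sub_C_eq_card]
    simpa using hcard
  have hqdeg : (X ^ n - 1 : F[X]).natDegree = n := by
    have := Polynomial.natDegree_X_pow_sub_C (n := n) (r := (1 : F))
    rwa [Polynomial.C_1] at this
  obtain ⟨u, hu⟩ := hdvd
  have hu0 : u ≠ 0 := by
    intro h; rw [h, mul_zero] at hu; exact hq0 hu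
  have hudeg : u.natDegree = 0 := by
    have := Polynomial.natDegree_mul hpmon.ne_zero hu0
    rw [← hu, hqdeg, hpdeg] at this
    omega
  obtain ⟨c, hc⟩ := Polynomial.natDegree_eq_zero.1 hudeg
  have hc1 : c = 1 := by
    have := congrArg Polynomial.leadingCoeff hu
    rw [hqmon.leadingCoeff, Polynomial.leadingCoeff_mul, hpmon.leadingCoeff, one_mul,
      ← hc, Polynomial.leadingCoeff_C] at this
    exact this.symm
  rw [hu, ← hc, hc1, Polynomial.C_1, mul_one]

theorem prod_sq_diff_squares (F : Type*) [Field F] [Fintype F] (n : ℕ)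
    (hcard : Fintype.card F = 2 * n + 1) (h5 : 5 ≤ Fintype.card F)
    (s : Fin (n - 1) → F) (hinj : Function.Injective s)
    (hrange : ∀ x : F, (∃ i, s i = x) ↔ (IsSquare x ∧ x ≠ 0 ∧ x ≠ 1)) :
    (-1 : F) ^ ((n - 1) * (n - 2) / 2) *
      ∏ p ∈ Finset.univ.filter (fun p : Fin (n - 1) × Fin (n - 1) => p.1 < p.2),
        (s p.2 - s p.1) ^ 2
      = (-1 / 2 : F) ^ (n - 2) := by
  classical
  have hn2 : 2 ≤ n := by omega
  set S : Finset F := Finset.univ.filter (fun x => IsSquare x ∧ x ≠ 0 ∧ x ≠ 1) with hS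
  have hmemS : ∀ x : F, x ∈ S ↔ IsSquare x ∧ x ≠ 0 ∧ x ≠ 1 := by
    intro x; simp [hS]
  have himg : Finset.image s Finset.univ = S := by
    ext x
    simp only [Finset.mem_image, Finset.mem_univ, true_and, hmemS]
    exact hrange x
  have hScard : S.card = n - 1 := by
    rw [← himg, Finset.card_image_of_injective _ hinj, Finset.card_univ, Fintype.card_fin]
  have h1S : (1 : F) ∉ S := by simp [hmemS]
  set T : Finset F := insert 1 S with hT
  have hmemT : ∀ x : F, x ∈ T ↔ IsSquare x ∧ x ≠ 0 := by
    intro x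
    rw [hT, Finset.mem_insert, hmemS]
    constructor
    · rintro (rfl | ⟨h1, h2, _⟩)
      · exact ⟨IsSquare.one, one_ne_zero⟩
      · exact ⟨h1, h2⟩
    · rintro ⟨h1, h2⟩
      by_cases hx : x = 1
      · exact Or.inl hx
      · exact Or.inr ⟨h1, h2, hx⟩
  have hTcard : T.card = n := by
    rw [hT, Finset.card_insert_of_notMem h1S, hScard]; omega
  have hpowT : ∀ c ∈ T, c ^ n = 1 := by
    intro c hc
    rw [hmemT] at hc
    obtain ⟨⟨x, hx⟩, hc0⟩ := hc
    have hx0 : x ≠ 0 := by rintro rfl; rw [hx] at hc0; simp at hc0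
    have h1 : x ^ (Fintype.card F - 1) = 1 := FiniteField.pow_card_sub_one_eq_one x hx0
    rw [hcard] at h1
    rw [hx]
    calc (x * x) ^ n = x ^ (2 * n) := by rw [← pow_two, ← pow_mul]
    _ = 1 := by rw [show 2 * n = 2 * n + 1 - 1 from rfl, h1]
  -- polynomial identity
  have hpoly : ∏ c ∈ T, (X - C c) = (X : F[X]) ^ n - 1 :=
    aux_poly T n (by omega) hTcard hpowT
  have hX1 : (X - C (1:F)) ≠ 0 := Polynomial.X_sub_C_ne_zero 1
  have hSpoly : ∏ c ∈ S, (X - C c) = ∑ i ∈ Finset.range n, (X : F[X]) ^ i := by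
    have h1 : (X - C (1:F)) * ∏ c ∈ S, (X - C c) = (X:F[X]) ^ n - 1 := by
      rw [← hpoly, hT, Finset.prod_insert h1S]
    apply mul_left_cancel₀ hX1
    rw [h1, Polynomial.C_1, ← geom_sum_mul (X : F[X]) n]; ring
  have hP : ∏ c ∈ S, ((1:F) - c) = (n : F) := by
    have h := congrArg (Polynomial.eval 1) hSpoly
    simpa [Polynomial.eval_prod, Polynomial.eval_finset_sum] using h
  have hP0 : (∏ c ∈ S, ((1:F) - c)) ≠ 0 :=
    Finset.prod_ne_zero_iff.2 fun c hc => sub_ne_zero.2 (Ne.symm ((hmemS c).1 hc).2.2)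
  have hprodT : ∏ c ∈ T, c = (-1 : F) ^ (n + 1) := by
    have h := congrArg (Polynomial.eval 0) hpoly
    rw [Polynomial.eval_prod] at h
    simp only [Polynomial.eval_sub, Polynomial.eval_X, Polynomial.eval_C, Polynomial.eval_pow,
      Polynomial.eval_one, zero_sub] at h
    have hzp : (0:F) ^ n = 0 := zero_pow (by omega)
    rw [hzp, zero_sub] at h
    have hneg : ∏ c ∈ T, (-c) = (-1:F)^n * ∏ c ∈ T, c := by
      rw [← hTcard, ← Finset.prod_const, ← Finset.prod_mul_distrib]
      simp
    rw [hneg] at h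
    have h2 : ((-1:F)^n) * ((-1:F)^n * ∏ c ∈ T, c) = (-1:F)^n * (-1) := by rw [h]
    rw [← mul_assoc, ← pow_add] at h2
    have h3 : (-1:F)^(n+n) = 1 := by
      rw [← two_mul, pow_mul]; norm_num
    rw [h3, one_mul] at h2
    rw [h2, pow_succ]
  have hprodS : ∏ c ∈ S, c = (-1 : F) ^ (n + 1) := by
    rw [← hprodT, hT, Finset.prod_insert h1S, one_mul]
  -- per-element lemma
  have hkey : ∀ a ∈ S, (a - 1) * ∏ b ∈ S.erase a, (a - b) = a ^ (n-1) * ∏ c ∈ S, ((1:F) - c) := by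
    intro a ha
    obtain ⟨hasq, ha0, ha1⟩ := (hmemS a).1 ha
    have hTa : T.erase a = insert 1 (S.erase a) := by
      rw [hT]; ext x
      simp only [Finset.mem_erase, Finset.mem_insert]
      constructor
      · rintro ⟨hxa, (rfl | hxS)⟩
        · exact Or.inl rfl
        · exact Or.inr ⟨hxa, hxS⟩
      · rintro (rfl | ⟨hxa, hxS⟩)
        · exact ⟨Ne.symm ha1, Or.inl rfl⟩
        · exact ⟨hxa, Or.inr hxS⟩
    have h1Sa : (1:F) ∉ S.erase a := fun h => h1S (Finset.mem_of_mem_erase h)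
    have hstep1 : ∏ b ∈ T.erase a, (a - b) = (a - 1) * ∏ b ∈ S.erase a, (a - b) := by
      rw [hTa, Finset.prod_insert h1Sa]
    have hstep2 : ∏ b ∈ T.erase a, (a - b) = ∏ c ∈ S, (a * (1 - c)) := by
      refine Finset.prod_nbij' (fun b => a⁻¹ * b) (fun c => a * c) ?_ ?_ ?_ ?_ ?_
      · intro b hb
        obtain ⟨hba, hbT⟩ := Finset.mem_erase.1 hb
        obtain ⟨hbsq, hb0⟩ := (hmemT b).1 hbT
        rw [hmemS]
        refine ⟨hasq.inv.mul hbsq, mul_ne_zero (inv_ne_zero ha0) hb0, ?_⟩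
        intro h
        rw [inv_mul_eq_one₀ ha0] at h
        exact hba h.symm
      · intro c hc
        obtain ⟨hcsq, hc0, hc1⟩ := (hmemS c).1 hc
        rw [Finset.mem_erase, hmemT]
        refine ⟨?_, hasq.mul hcsq, mul_ne_zero ha0 hc0⟩
        intro h
        rw [mul_right_eq_self₀] at h
        rcases h with h | h
        · exact hc1 h
        · exact ha0 h
      · intro b _
        show a * (a⁻¹ * b) = b
        rw [← mul_assoc, mul_inv_cancel₀ ha0, one_mul]
      · intro c _
        show a⁻¹ * (a * c) = c
        rw [← mul_assoc, inv_mul_cancel₀ ha0, one_mul]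
      · intro b _
        show a - b = a * (1 - a⁻¹ * b)
        rw [mul_sub, mul_one, ← mul_assoc, mul_inv_cancel₀ ha0, one_mul]
    rw [← hstep1, hstep2, Finset.prod_mul_distrib, Finset.prod_const, hScard]
  -- the total double product
  have hn0F : ((n:F)) ≠ 0 := hP ▸ hP0
  have htotal : ∏ a ∈ S, ∏ b ∈ S.erase a, (a - b) = (n:F) ^ (n-2) := by
    have h1 : ∀ a ∈ S, ∏ b ∈ S.erase a, (a - b)
        = (a - 1)⁻¹ * (a ^ (n-1) * ∏ c ∈ S, ((1:F) - c)) := by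
      intro a ha
      have ha1 : a - 1 ≠ 0 := sub_ne_zero.2 ((hmemS a).1 ha).2.2
      rw [← hkey a ha, ← mul_assoc, inv_mul_cancel₀ ha1, one_mul]
    rw [Finset.prod_congr rfl h1, Finset.prod_mul_distrib, Finset.prod_mul_distrib,
      Finset.prod_inv_distrib, Finset.prod_pow, Finset.prod_const, hScard, hP, hprodS]
    have hflip : ∏ a ∈ S, (a - 1) = (-1:F)^(n-1) * (n:F) := by
      rw [← hP, ← hScard, ← Finset.prod_const, ← Finset.prod_mul_distrib]
      exact Finset.prod_congr rfl (fun a _ => by ring)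
    rw [hflip]
    have hsq : ((-1:F)^(n-1)) * ((-1:F)^(n+1))^(n-1) = 1 := by
      rw [← pow_mul, ← pow_add]
      apply Even.neg_one_pow
      obtain ⟨m, rfl⟩ : ∃ m, n = m + 2 := ⟨n - 2, by omega⟩
      have he : (m+2-1) + (m+2+1)*(m+2-1) = (m+1)*(m+4) := by
        show (m+1) + (m+3)*(m+1) = (m+1)*(m+4)
        ring
      rw [he]
      rcases Nat.even_or_odd m with h | h
      · exact Even.mul_left (h.add (by decide)) _
      · exact Even.mul_right (h.add_one) _
    have hpow : (n:F)⁻¹ * (n:F)^(n-1) = (n:F)^(n-2) := by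
      obtain ⟨m, rfl⟩ : ∃ m, n = m + 2 := ⟨n - 2, by omega⟩
      show ((m+2:ℕ):F)⁻¹ * ((m+2:ℕ):F)^(m+1) = ((m+2:ℕ):F)^m
      rw [pow_succ, mul_comm (((m+2:ℕ):F)^m), ← mul_assoc, inv_mul_cancel₀ hn0F, one_mul]
    rw [mul_inv, ← inv_pow, inv_neg_one]
    calc (-1:F)^(n-1) * (n:F)⁻¹ * (((-1:F)^(n+1))^(n-1) * (n:F)^(n-1))
        = ((-1:F)^(n-1) * ((-1:F)^(n+1))^(n-1)) * ((n:F)⁻¹ * (n:F)^(n-1)) := by ring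
      _ = 1 * (n:F)^(n-2) := by rw [hsq, hpow]
      _ = (n:F)^(n-2) := one_mul _
  have hoffprod : ∏ p ∈ (Finset.univ : Finset (Fin (n-1))).offDiag, (s p.1 - s p.2)
      = ∏ i : Fin (n-1), ∏ j ∈ Finset.univ.erase i, (s i - s j) := by
    have hdef : (Finset.univ : Finset (Fin (n-1))).offDiag
        = (Finset.univ ×ˢ Finset.univ).filter (fun p : Fin (n-1) × Fin (n-1) => p.1 ≠ p.2) := by ext p; simp
    rw [hdef, Finset.prod_filter, Finset.prod_product]
    apply Finset.prod_congr rfl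
    intro i _
    rw [← Finset.prod_filter]
    have hset : (Finset.univ.filter (fun j : Fin (n-1) => (i, j).1 ≠ (i, j).2))
        = Finset.univ.erase i := by
      ext j; simp [eq_comm]
    rw [hset]
  have houter : ∏ i : Fin (n-1), ∏ j ∈ Finset.univ.erase i, (s i - s j)
      = ∏ a ∈ S, ∏ b ∈ S.erase a, (a - b) := by
    rw [← himg, Finset.prod_image (fun i _ j _ h => hinj h)]
    apply Finset.prod_congr rfl
    intro i _
    rw [← Finset.image_erase hinj, Finset.prod_image (fun a _ b _ h => hinj h)]
  have hcast : ((n:F)) = -1/2 := by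
    have h0 : ((2*n+1 : ℕ) : F) = 0 := by rw [← hcard]; exact FiniteField.cast_card_eq_zero F
    push_cast at h0
    have h2 : (2:F) ≠ 0 := by
      intro h
      rw [h, zero_mul, zero_add] at h0
      exact one_ne_zero h0
    field_simp
    linear_combination h0
  have hfin : ∏ p ∈ (Finset.univ : Finset (Fin (n-1))).offDiag, (s p.1 - s p.2)
      = (-1/2 : F)^(n-2) := by
    rw [hoffprod, houter, htotal, hcast]
  have he : (n-1) * (n-2) / 2 = (n-1) * ((n-1) - 1) / 2 := by
    congr 1
  rw [he, aux_pairs s, hfin]
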